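/- Let Σ be a d×d real symmetric positive semidefinite matrix, Σ̃ a d×d real symmetric positive definite matrix, μ, μ̃ ∈ ℝ^d, and P = Σ̃^{−1/2}·(Σ̃^{1/2}·Σ·Σ̃^{1/2})^{1/2}·Σ̃^{−1/2} the optimal transport map matrix. Let ν be a probability measure on ℝ^d with square-integrable identity map, mean ∫ y dν(y) = μ̃, and covariance matrix with entries ∫ (y_i − μ̃_i)(y_j − μ̃_j) dν equal to Σ̃. Define T : ℝ^d → ℝ^d by T(y) = μ + P·(y − μ̃). Then the pushforward measure T_*ν has mean μ and covariance matrix Σ, and ∫ ‖T(y) − y‖² dν(y) = ‖μ − μ̃‖² + tr(Σ) + tr(Σ̃) − 2·tr((Σ̃^{1/2}·Σ·Σ̃^{1/2})^{1/2}). -/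

import Mathlib

open MeasureTheory Matrix
open scoped Classical

/-- The unique positive semidefinite square root of a positive semidefinite real matrix
(junk value `0` if the matrix is not positive semidefinite). -/
noncomputable def psdSqrt {d : ℕ} (A : Matrix (Fin d) (Fin d) ℝ) : Matrix (Fin d) (Fin d) ℝ :=
  if h : A.PosSemidef then
    (h.1.eigenvectorUnitary : Matrix (Fin d) (Fin d) ℝ) *
      diagonal ((↑) ∘ (√·) ∘ h.1.eigenvalues) *
      (star h.1.eigenvectorUnitary : Matrix (Fin d) (Fin d) ℝ)
  else 0

/-- The optimal transport map matrix `P = Σ̃^{-1/2} (Σ̃^{1/2} Σ Σ̃^{1/2})^{1/2} Σ̃^{-1/2}`. -/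
noncomputable def otMap {d : ℕ} (S St : Matrix (Fin d) (Fin d) ℝ) :
    Matrix (Fin d) (Fin d) ℝ :=
  (psdSqrt St)⁻¹ * psdSqrt (psdSqrt St * S * psdSqrt St) * (psdSqrt St)⁻¹

section MatAux
variable {d : ℕ} {S St : Matrix (Fin d) (Fin d) ℝ}

lemma psdSqrt_of_posSemidef {A : Matrix (Fin d) (Fin d) ℝ} (hA : A.PosSemidef) :
    psdSqrt A = (hA.1.eigenvectorUnitary : Matrix (Fin d) (Fin d) ℝ) *
      diagonal ((↑) ∘ (√·) ∘ hA.1.eigenvalues) *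
      (star hA.1.eigenvectorUnitary : Matrix (Fin d) (Fin d) ℝ) := dif_pos hA

lemma psdSqrt_posSemidef {A : Matrix (Fin d) (Fin d) ℝ} (hA : A.PosSemidef) :
    (psdSqrt A).PosSemidef := by
  rw [psdSqrt_of_posSemidef hA]
  have hD : (diagonal ((↑) ∘ (√·) ∘ hA.1.eigenvalues) : Matrix (Fin d) (Fin d) ℝ).PosSemidef :=
    posSemidef_diagonal_iff.mpr fun i => by simp [Real.sqrt_nonneg]
  have := hD.mul_mul_conjTranspose_same (hA.1.eigenvectorUnitary : Matrix (Fin d) (Fin d) ℝ)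
  rwa [← star_eq_conjTranspose] at this

lemma psdSqrt_mul_self {A : Matrix (Fin d) (Fin d) ℝ} (hA : A.PosSemidef) :
    psdSqrt A * psdSqrt A = A := by
  rw [psdSqrt_of_posSemidef hA]
  conv_rhs => rw [hA.1.spectral_theorem]
  rw [Unitary.conjStarAlgAut_apply]
  have hU := Unitary.coe_star_mul_self hA.1.eigenvectorUnitary
  calc _ = (hA.1.eigenvectorUnitary : Matrix (Fin d) (Fin d) ℝ) *
      (diagonal ((↑) ∘ (√·) ∘ hA.1.eigenvalues) * ((star hA.1.eigenvectorUnitary : Matrix (Fin d) (Fin d) ℝ) * (hA.1.eigenvectorUnitary : Matrix (Fin d) (Fin d) ℝ)) *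
      diagonal ((↑) ∘ (√·) ∘ hA.1.eigenvalues)) * (star hA.1.eigenvectorUnitary : Matrix (Fin d) (Fin d) ℝ) := by
        simp only [Matrix.mul_assoc]
    _ = _ := by
      rw [hU, Matrix.mul_one, diagonal_mul_diagonal]
      congr 3
      funext i
      simp [Real.mul_self_sqrt (hA.eigenvalues_nonneg i)]

lemma psdSqrt_isUnit_det (hSt : St.PosDef) : IsUnit (psdSqrt St).det := by
  have h := psdSqrt_mul_self hSt.posSemidef
  have : (psdSqrt St).det * (psdSqrt St).det = St.det := by
    rw [← Matrix.det_mul, h]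
  have hd : St.det ≠ 0 := hSt.det_pos.ne'
  refine isUnit_iff_ne_zero.mpr fun h0 => hd ?_
  rw [← this, h0, mul_zero]

lemma midPosSemidef (hS : S.PosSemidef) (hSt : St.PosDef) :
    (psdSqrt St * S * psdSqrt St).PosSemidef := by
  have hs := psdSqrt_posSemidef hSt.posSemidef
  have := hS.mul_mul_conjTranspose_same (psdSqrt St)
  rwa [hs.1.eq] at this

lemma otMap_symm (hS : S.PosSemidef) (hSt : St.PosDef) :
    (otMap S St)ᵀ = otMap S St := by
  have hs := psdSqrt_posSemidef hSt.posSemidef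
  have hm := psdSqrt_posSemidef (midPosSemidef hS hSt)
  have h1 : (psdSqrt St)⁻¹ᵀ = (psdSqrt St)⁻¹ := by
    have := (Matrix.conjTranspose_nonsing_inv (A := psdSqrt St))
    simp only [conjTranspose_eq_transpose_of_trivial] at this
    rw [this]
    congr 1
    simpa [Matrix.IsHermitian, conjTranspose_eq_transpose_of_trivial] using hs.1
  have h2 : (psdSqrt (psdSqrt St * S * psdSqrt St))ᵀ = psdSqrt (psdSqrt St * S * psdSqrt St) := by
    simpa [Matrix.IsHermitian, conjTranspose_eq_transpose_of_trivial] using hm.1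
  rw [otMap, Matrix.transpose_mul, Matrix.transpose_mul, h1, h2, ← Matrix.mul_assoc]

lemma otMap_mul_St_mul (hS : S.PosSemidef) (hSt : St.PosDef) :
    otMap S St * St * otMap S St = S := by
  set s := psdSqrt St with hsdef
  set m := psdSqrt (s * S * s) with hmdef
  have hdet := psdSqrt_isUnit_det hSt
  have h1 : s⁻¹ * s = 1 := Matrix.nonsing_inv_mul _ hdet
  have h2 : s * s⁻¹ = 1 := Matrix.mul_nonsing_inv _ hdet
  have hss : s * s = St := psdSqrt_mul_self hSt.posSemidef
  have hmm : m * m = s * S * s := psdSqrt_mul_self (midPosSemidef hS hSt)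
  have : otMap S St * St * otMap S St
      = s⁻¹ * ((m * (s⁻¹ * s)) * ((s * s⁻¹) * m)) * s⁻¹ := by
    rw [otMap, ← hsdef, ← hmdef, ← hss]
    simp only [Matrix.mul_assoc]
  rw [this, h1, h2, Matrix.mul_one, Matrix.one_mul, hmm]
  have : s⁻¹ * (s * S * s) * s⁻¹ = (s⁻¹ * s) * S * (s * s⁻¹) := by
    simp only [Matrix.mul_assoc]
  rw [this, h1, h2, Matrix.one_mul, Matrix.mul_one]

lemma otMap_trace (hSt : St.PosDef) :
    (otMap S St * St).trace = (psdSqrt (psdSqrt St * S * psdSqrt St)).trace := by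
  set s := psdSqrt St with hsdef
  set m := psdSqrt (s * S * s) with hmdef
  have hdet := psdSqrt_isUnit_det hSt
  have h1 : s⁻¹ * s = 1 := Matrix.nonsing_inv_mul _ hdet
  have h2 : s * s⁻¹ = 1 := Matrix.mul_nonsing_inv _ hdet
  have hss : s * s = St := psdSqrt_mul_self hSt.posSemidef
  have e : otMap S St * St = s⁻¹ * (m * ((s⁻¹ * s) * s)) := by
    rw [otMap, ← hsdef, ← hmdef, ← hss]; simp only [Matrix.mul_assoc]
  rw [e, h1, Matrix.one_mul, Matrix.trace_mul_comm, Matrix.mul_assoc, h2, Matrix.mul_one]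

lemma sum_sum_eq_mul_mul (A B C : Matrix (Fin d) (Fin d) ℝ) (i j : Fin d) :
    ∑ k, ∑ l, (A i k * B j l) * C k l = (A * C * Bᵀ) i j := by
  simp only [Matrix.mul_apply, Matrix.transpose_apply, Finset.sum_mul]
  rw [Finset.sum_comm]
  exact Finset.sum_congr rfl fun l _ => Finset.sum_congr rfl fun k _ => by ring

end MatAux

lemma integrable_mul_of_memL2 {α : Type*} [MeasurableSpace α] {μ : Measure α} {f g : α → ℝ}
    (hf : MemLp f 2 μ) (hg : MemLp g 2 μ) : Integrable (fun x => f x * g x) μ := by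
  have h1 : Integrable (fun x => (f x + g x) ^ 2) μ := by
    simpa [Pi.add_apply] using (hf.add hg).integrable_sq
  have h2 := hf.integrable_sq
  have h3 := hg.integrable_sq
  have he : (fun x => f x * g x) = fun x => ((f x + g x) ^ 2 - f x ^ 2 - g x ^ 2) / 2 := by
    funext x; ring
  rw [he]; exact ((h1.sub h2).sub h3).div_const 2

lemma euclidean_norm_sq {d : ℕ} (v : EuclideanSpace ℝ (Fin d)) :
    ‖v‖ ^ 2 = ∑ i, (v i) ^ 2 := by
  rw [EuclideanSpace.norm_eq, Real.sq_sqrt (by positivity)]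
  simp [sq_abs]


/-- **The affine transport map matches the target moments and attains the Gelbrich cost.**
Let `Σ` be positive semidefinite, `Σ̃` positive definite, `ν` a probability measure on `ℝ^d`
with square-integrable identity, mean `μ̃` and covariance `Σ̃`, and `T y = μ + P (y - μ̃)`
with `P` the optimal transport map matrix. Then the pushforward `T_* ν` has mean `μ` and
covariance `Σ`, and
`∫ ‖T y - y‖² dν = ‖μ - μ̃‖² + tr Σ + tr Σ̃ - 2 tr ((Σ̃^{1/2} Σ Σ̃^{1/2})^{1/2})`. -/
theorem otMap_pushforward_moments_and_cost
    {d : ℕ}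
    (S St : Matrix (Fin d) (Fin d) ℝ) (hS : S.PosSemidef) (hSt : St.PosDef)
    (μ μt : EuclideanSpace ℝ (Fin d))
    (ν : Measure (EuclideanSpace ℝ (Fin d))) [IsProbabilityMeasure ν]
    (hint : MemLp (fun y => y) 2 ν)
    (hmean : (∫ y, y ∂ν) = μt)
    (hcov : ∀ i j, (∫ y, (y i - μt i) * (y j - μt j) ∂ν) = St i j)
    (T : EuclideanSpace ℝ (Fin d) → EuclideanSpace ℝ (Fin d))
    (hT : ∀ y, T y = μ + Matrix.toEuclideanLin (otMap S St) (y - μt)) :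
    (∫ x, x ∂(ν.map T)) = μ ∧
    (∀ i j, (∫ x, (x i - μ i) * (x j - μ j) ∂(ν.map T)) = S i j) ∧
    (∫ y, ‖T y - y‖ ^ 2 ∂ν) =
      ‖μ - μt‖ ^ 2 + S.trace + St.trace
        - 2 * (psdSqrt (psdSqrt St * S * psdSqrt St)).trace := by
  set P := otMap S St with hPdef
  set L : EuclideanSpace ℝ (Fin d) →L[ℝ] EuclideanSpace ℝ (Fin d) :=
    LinearMap.toContinuousLinearMap (Matrix.toEuclideanLin P) with hLdef
  have hTe : T = fun y => μ + L (y - μt) := funext fun y => hT y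
  have hTcont : Continuous T := by
    rw [hTe]
    exact continuous_const.add (L.continuous.comp (continuous_id.sub continuous_const))
  have hi : Integrable (fun y => y) ν := hint.integrable one_le_two
  have hsub : Integrable (fun y : EuclideanSpace ℝ (Fin d) => y - μt) ν :=
    hi.sub (integrable_const μt)
  have hintsub : (∫ y, (y - μt) ∂ν) = 0 := by
    rw [integral_sub hi (integrable_const μt), hmean, integral_const]
    simp
  -- coordinates
  have hcoord : ∀ i, MemLp (fun y : EuclideanSpace ℝ (Fin d) => y i) 2 ν := fun i => by
    exact (EuclideanSpace.proj (𝕜 := ℝ) i).comp_memLp' hint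
  have hf2 : ∀ i, MemLp (fun y : EuclideanSpace ℝ (Fin d) => y i - μt i) 2 ν := fun i => by
    exact (hcoord i).sub (memLp_const (μt i))
  have hproj : ∀ i, (∫ y, y i ∂ν) = μt i := fun i => by
    have := (EuclideanSpace.proj (𝕜 := ℝ) i).integral_comp_comm hi
    simpa [hmean] using this
  have hf0 : ∀ i, (∫ y, (y i - μt i) ∂ν) = 0 := fun i => by
    rw [integral_sub ((hcoord i).integrable one_le_two) (integrable_const _), hproj i,
      integral_const]
    simp
  have hmul : ∀ i j, Integrable (fun y : EuclideanSpace ℝ (Fin d) =>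
      (y i - μt i) * (y j - μt j)) ν := fun i j => integrable_mul_of_memL2 (hf2 i) (hf2 j)
  -- coordinate formula for T
  have hTco : ∀ y (i : Fin d), T y i = μ i + ∑ k, P i k * (y k - μt k) := by
    intro y i
    rw [hT y]
    simp [Matrix.toEuclideanLin_apply, Matrix.mulVec, dotProduct,
      PiLp.add_apply, PiLp.sub_apply]
  -- mean
  have hmean' : (∫ x, x ∂(ν.map T)) = μ := by
    rw [integral_map (f := fun x => x) hTcont.aemeasurable aestronglyMeasurable_id]
    calc (∫ y, T y ∂ν) = ∫ y, (μ + L (y - μt)) ∂ν := by rw [hTe]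
      _ = μ + L (∫ y, (y - μt) ∂ν) := by
          rw [integral_add (integrable_const μ) (L.integrable_comp hsub),
            integral_const, L.integral_comp_comm hsub]
          simp
      _ = μ := by rw [hintsub]; simp
  refine ⟨hmean', fun i j => ?_, ?_⟩
  · -- covariance
    have hgm : AEStronglyMeasurable
        (fun x : EuclideanSpace ℝ (Fin d) => (x i - μ i) * (x j - μ j)) (ν.map T) := by
      refine Continuous.aestronglyMeasurable ?_
      exact (((EuclideanSpace.proj (𝕜 := ℝ) i).continuous.sub continuous_const).mul
        ((EuclideanSpace.proj (𝕜 := ℝ) j).continuous.sub continuous_const))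
    rw [integral_map hTcont.aemeasurable hgm]
    have hpt : ∀ y, (T y i - μ i) * (T y j - μ j)
        = ∑ k, ∑ l, (P i k * P j l) * ((y k - μt k) * (y l - μt l)) := by
      intro y
      rw [hTco y i, hTco y j, add_sub_cancel_left, add_sub_cancel_left, Finset.sum_mul_sum]
      exact Finset.sum_congr rfl fun k _ => Finset.sum_congr rfl fun l _ => by ring
    simp_rw [hpt]
    rw [integral_finset_sum _ (fun k _ =>
      integrable_finset_sum _ (fun l _ => (hmul k l).const_mul _))]
    have : ∀ k, (∫ y, ∑ l, (P i k * P j l) * ((y k - μt k) * (y l - μt l)) ∂ν)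
        = ∑ l, (P i k * P j l) * St k l := by
      intro k
      rw [integral_finset_sum _ (fun l _ => (hmul k l).const_mul _)]
      exact Finset.sum_congr rfl fun l _ => by rw [integral_const_mul, hcov k l]
    rw [Finset.sum_congr rfl fun k _ => this k, sum_sum_eq_mul_mul,
      otMap_symm hS hSt, ← hPdef, otMap_mul_St_mul hS hSt]
  · -- cost
    set Q := P - 1 with hQdef
    set c := μ - μt with hcdef
    have hcapp : ∀ k : Fin d, c k = μ k - μt k := fun k => rfl
    have hptQ : ∀ y (i : Fin d), T y i - y i = c i + ∑ k, Q i k * (y k - μt k) := by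
      intro y i
      rw [hTco y i]
      have h1 : ∑ k, Q i k * (y k - μt k)
          = (∑ k, P i k * (y k - μt k)) - (y i - μt i) := by
        simp only [hQdef, Matrix.sub_apply, sub_mul, Finset.sum_sub_distrib]
        congr 1
        simp [Matrix.one_apply]
      rw [h1, hcapp]
      ring
    have hnrm : ∀ y, ‖T y - y‖ ^ 2
        = ∑ i, ((c i ^ 2 + ∑ k, (2 * c i * Q i k) * (y k - μt k))
            + ∑ k, ∑ l, (Q i k * Q i l) * ((y k - μt k) * (y l - μt l))) := by
      intro y
      rw [euclidean_norm_sq]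
      refine Finset.sum_congr rfl fun i _ => ?_
      have : (T y - y) i = T y i - y i := rfl
      rw [this, hptQ y i, add_sq, Finset.mul_sum, pow_two (∑ k, Q i k * (y k - μt k)), Finset.sum_mul_sum]
      congr 1
      · congr 1
        exact Finset.sum_congr rfl fun k _ => by ring
      · exact Finset.sum_congr rfl fun k _ => Finset.sum_congr rfl fun l _ => by ring
    simp_rw [hnrm]
    have hint1 : ∀ i : Fin d, Integrable (fun y : EuclideanSpace ℝ (Fin d) =>
        c i ^ 2 + ∑ k, (2 * c i * Q i k) * (y k - μt k)) ν := fun i =>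
      (integrable_const _).add (integrable_finset_sum _
        (fun k _ => ((hf2 k).integrable one_le_two).const_mul _))
    have hint2 : ∀ i : Fin d, Integrable (fun y : EuclideanSpace ℝ (Fin d) =>
        ∑ k, ∑ l, (Q i k * Q i l) * ((y k - μt k) * (y l - μt l))) ν := fun i =>
      integrable_finset_sum _ (fun k _ =>
        integrable_finset_sum _ (fun l _ => (hmul k l).const_mul _))
    have hint12 : ∀ i : Fin d, Integrable (fun y : EuclideanSpace ℝ (Fin d) =>
        (c i ^ 2 + ∑ k, (2 * c i * Q i k) * (y k - μt k))
          + ∑ k, ∑ l, (Q i k * Q i l) * ((y k - μt k) * (y l - μt l))) ν :=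
      fun i => (hint1 i).add (hint2 i)
    rw [integral_finset_sum _ (fun i _ => hint12 i)]
    have hIi : ∀ i : Fin d,
        (∫ y, ((c i ^ 2 + ∑ k, (2 * c i * Q i k) * (y k - μt k))
            + ∑ k, ∑ l, (Q i k * Q i l) * ((y k - μt k) * (y l - μt l))) ∂ν)
        = c i ^ 2 + (Q * St * Qᵀ) i i := by
      intro i
      rw [integral_add (hint1 i) (hint2 i),
        integral_add (integrable_const _) (integrable_finset_sum _
          (fun k _ => ((hf2 k).integrable one_le_two).const_mul _)),
        integral_const,
        integral_finset_sum _ (fun k _ => ((hf2 k).integrable one_le_two).const_mul _),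
        integral_finset_sum _ (fun k _ =>
          integrable_finset_sum _ (fun l _ => (hmul k l).const_mul _))]
      have e1 : ∀ k : Fin d, (∫ y, (2 * c i * Q i k) * (y k - μt k) ∂ν) = 0 := fun k => by
        rw [integral_const_mul, hf0 k, mul_zero]
      have e2 : ∀ k, (∫ y, ∑ l, (Q i k * Q i l) * ((y k - μt k) * (y l - μt l)) ∂ν)
          = ∑ l, (Q i k * Q i l) * St k l := fun k => by
        rw [integral_finset_sum _ (fun l _ => (hmul k l).const_mul _)]
        exact Finset.sum_congr rfl fun l _ => by rw [integral_const_mul, hcov k l]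
      rw [Finset.sum_congr rfl fun k _ => e1 k, Finset.sum_congr rfl fun k _ => e2 k,
        sum_sum_eq_mul_mul]
      simp
    rw [Finset.sum_congr rfl fun i _ => hIi i, Finset.sum_add_distrib]
    have hcn : ∑ i, c i ^ 2 = ‖μ - μt‖ ^ 2 := (euclidean_norm_sq c).symm
    have htr : ∑ i, (Q * St * Qᵀ) i i = (Q * St * Qᵀ).trace := rfl
    rw [hcn, htr]
    have hQT : Qᵀ = Q := by
      rw [hQdef, Matrix.transpose_sub, Matrix.transpose_one, otMap_symm hS hSt]
    have hexp : Q * St * Qᵀ = P * St * P - P * St - St * P + St := by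
      rw [hQT, hQdef]
      simp only [Matrix.sub_mul, Matrix.mul_sub, Matrix.one_mul, Matrix.mul_one]
      abel
    rw [hexp]
    have htr2 : (St * P).trace = (P * St).trace := Matrix.trace_mul_comm St P
    simp only [Matrix.trace_add, Matrix.trace_sub]
    rw [htr2, otMap_mul_St_mul hS hSt, otMap_trace hSt]
    ring
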